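/- Let λ^{(γ)} (γ > 0) be a family of random Young diagrams with column lengths λ^{(γ)}_1 ≥ λ^{(γ)}_2 ≥ …, and set Λ^{(γ)}_k = Σ_{i=1}^k λ^{(γ)}_i. Let a, b be positive functions of γ with a(γ) → ∞ as γ → ∞. Suppose there is a deterministic G : ℝ_{≥0} → ℝ_{≥0} such that b(γ)·Λ^{(γ)}_{⌊a(γ)r⌋} → G(r) in probability for every r ≥ 0. Then G is increasing and concave, and for every r > 0 where G is differentiable, a(γ)·b(γ)·λ^{(γ)}_{⌊a(γ)r⌋+1} → G'(r) in probability. -/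

import Mathlib

open Set Filter MeasureTheory

private lemma antitone_sum_lower {f : ℕ → ℕ} (hf : Antitone f) {k m : ℕ} (h : k ≤ m) :
    ((m : ℝ) - k) * (f m : ℝ) ≤ ∑ i ∈ Finset.Ico k m, (f i : ℝ) := by
  have h1 := Finset.card_nsmul_le_sum (Finset.Ico k m) (fun i => (f i : ℝ)) (f m : ℝ)
    (fun i hi => Nat.cast_le.2 (hf (le_of_lt (Finset.mem_Ico.1 hi).2)))
  have hc : (Finset.Ico k m).card = m - k := Nat.card_Ico k m
  rw [hc, nsmul_eq_mul] at h1
  rwa [← Nat.cast_sub h]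

private lemma antitone_sum_upper {f : ℕ → ℕ} (hf : Antitone f) {m n : ℕ} (h : m ≤ n) :
    (∑ i ∈ Finset.Ico m n, (f i : ℝ)) ≤ ((n : ℝ) - m) * (f m : ℝ) := by
  have h1 := Finset.sum_le_card_nsmul (Finset.Ico m n) (fun i => (f i : ℝ)) (f m : ℝ)
    (fun i hi => Nat.cast_le.2 (hf (Finset.mem_Ico.1 hi).1))
  have hc : (Finset.Ico m n).card = n - m := Nat.card_Ico m n
  rw [hc, nsmul_eq_mul] at h1
  rwa [← Nat.cast_sub h]

private lemma exists_good {α : Type*} [MeasurableSpace α] (μ : Measure α)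
    [IsProbabilityMeasure μ] (S T U : ℝ → Set α)
    (hS : Tendsto (fun γ => μ (S γ)) atTop (nhds 0))
    (hT : Tendsto (fun γ => μ (T γ)) atTop (nhds 0))
    (hU : Tendsto (fun γ => μ (U γ)) atTop (nhds 0)) :
    ∀ᶠ γ in atTop, ∃ ω, ω ∉ S γ ∧ ω ∉ T γ ∧ ω ∉ U γ := by
  have hsum : Tendsto (fun γ => μ (S γ) + μ (T γ) + μ (U γ)) atTop (nhds 0) := by
    simpa using (hS.add hT).add hU
  have hev : ∀ᶠ γ in atTop, μ (S γ) + μ (T γ) + μ (U γ) < 1 :=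
    hsum.eventually_lt_const (by norm_num)
  filter_upwards [hev] with γ hγ
  by_contra hcon
  push_neg at hcon
  have hsub : (univ : Set α) ⊆ S γ ∪ T γ ∪ U γ := by
    intro ω _
    simp only [mem_union]
    by_cases h1 : ω ∈ S γ
    · exact Or.inl (Or.inl h1)
    by_cases h2 : ω ∈ T γ
    · exact Or.inl (Or.inr h2)
    exact Or.inr (hcon ω h1 h2)
  have h1 : (1 : ENNReal) ≤ μ (S γ ∪ T γ ∪ U γ) := by
    rw [← measure_univ (μ := μ)]; exact measure_mono hsub
  have h2 : μ (S γ ∪ T γ ∪ U γ) ≤ μ (S γ) + μ (T γ) + μ (U γ) :=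
    le_trans (measure_union_le _ _) (add_le_add (measure_union_le _ _) le_rfl)
  exact absurd (lt_of_le_of_lt (h1.trans h2) hγ) (lt_irrefl _)

set_option maxHeartbeats 1000000 in
private lemma mono_lemma {α : Type*} [MeasurableSpace α] (μ : Measure α)
    [IsProbabilityMeasure μ] (l : ℝ → α → ℕ → ℕ)
    (hyoung : ∀ γ ω, Antitone (l γ ω))
    (a b : ℝ → ℝ) (hapos : ∀ γ, 0 < a γ) (hbpos : ∀ γ, 0 < b γ)
    (hatop : Tendsto a atTop atTop)
    (G : ℝ → ℝ)
    (hconv : ∀ r ≥ (0 : ℝ), ∀ ε > (0 : ℝ),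
      Tendsto (fun γ => μ {ω |
          ε ≤ |b γ * (∑ i ∈ Finset.range ⌊a γ * r⌋₊, (l γ ω i : ℝ)) - G r|})
        atTop (nhds 0)) :
    MonotoneOn G (Set.Ici 0) := by
  intro x hx y hy hxy
  by_contra hlt
  push_neg at hlt
  set δ := (G x - G y) / 2 with hδ
  have hδpos : 0 < δ := by simp only [hδ]; linarith
  have h1 := hconv x hx δ hδpos
  have h2 := hconv y hy δ hδpos
  obtain ⟨γ, ω, hω1, hω2, -⟩ := (exists_good μ _ _ _ h1 h2 h2).exists
  simp only [mem_setOf_eq, not_le] at hω1 hω2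
  have hsum : (∑ i ∈ Finset.range ⌊a γ * x⌋₊, (l γ ω i : ℝ)) ≤
      ∑ i ∈ Finset.range ⌊a γ * y⌋₊, (l γ ω i : ℝ) := by
    apply Finset.sum_le_sum_of_subset_of_nonneg
    · exact Finset.range_subset_range.2 (Nat.floor_le_floor
        (mul_le_mul_of_nonneg_left hxy (hapos γ).le))
    · intro i _ _; positivity
  have hb := hbpos γ
  have habs1 := abs_lt.1 hω1
  have habs2 := abs_lt.1 hω2
  have := mul_le_mul_of_nonneg_left hsum hb.le
  simp only [hδ] at habs1 habs2
  linarith [habs1.1, habs2.2]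
-- Key slope inequality

set_option maxHeartbeats 1000000 in
private lemma slope_lemma {α : Type*} [MeasurableSpace α] (μ : Measure α)
    [IsProbabilityMeasure μ] (l : ℝ → α → ℕ → ℕ)
    (hyoung : ∀ γ ω, Antitone (l γ ω))
    (a b : ℝ → ℝ) (hapos : ∀ γ, 0 < a γ) (hbpos : ∀ γ, 0 < b γ)
    (hatop : Tendsto a atTop atTop)
    (G : ℝ → ℝ)
    (hconv : ∀ r ≥ (0 : ℝ), ∀ ε > (0 : ℝ),
      Tendsto (fun γ => μ {ω |
          ε ≤ |b γ * (∑ i ∈ Finset.range ⌊a γ * r⌋₊, (l γ ω i : ℝ)) - G r|})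
        atTop (nhds 0)) (hmono : MonotoneOn G (Set.Ici 0)) :
    ∀ x ∈ Set.Ici (0:ℝ), ∀ z ∈ Set.Ici (0:ℝ), ∀ y : ℝ, x < y → y < z →
      (G z - G y) * (y - x) ≤ (G y - G x) * (z - y) := by
  intro x hx z hz y hxy hyz
  by_contra hcon
  push_neg at hcon
  set c := (G z - G y) * (y - x) - (G y - G x) * (z - y) with hc
  have hcpos : 0 < c := by simp only [hc]; linarith
  have hy : y ∈ Set.Ici (0:ℝ) := le_trans hx hxy.le
  have hzi : (0:ℝ) ≤ z := hz
  have hGxy : G x ≤ G y := hmono hx hy hxy.le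
  have hGyz : G y ≤ G z := hmono hy hz hyz.le
  have hGzy : 0 < G z - G y := by nlinarith
  set δ := min ((G z - G y) / 4) (c / (8 * (z - x))) with hδ
  have hzx : (0:ℝ) < z - x := by linarith
  have hδpos : 0 < δ := lt_min (by linarith) (by positivity)
  have hδ1 : δ ≤ (G z - G y) / 4 := min_le_left _ _
  have hδ2 : δ ≤ c / (8 * (z - x)) := min_le_right _ _
  have h1 := hconv x hx δ hδpos
  have h2 := hconv y hy δ hδpos
  have h3 := hconv z hz δ hδpos
  set M : ℝ := (G z - G x) / (3 * c / 4) + 1 with hM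
  obtain ⟨γ, hgood, hAM⟩ :=
    ((exists_good μ _ _ _ h1 h2 h3).and (hatop.eventually_ge_atTop M)).exists
  obtain ⟨ω, hω1, hω2, hω3⟩ := hgood
  simp only [mem_setOf_eq, not_le] at hω1 hω2 hω3
  set A := a γ with hA
  have hApos := hapos γ
  have hbp := hbpos γ
  set k := ⌊A * x⌋₊ with hk
  set p := ⌊A * y⌋₊ with hp
  set q := ⌊A * z⌋₊ with hq
  have hkp : k ≤ p := Nat.floor_le_floor (by nlinarith)
  have hpq : p ≤ q := Nat.floor_le_floor (by nlinarith)
  have hkb : (k:ℝ) ≤ A * x := Nat.floor_le (mul_nonneg hApos.le hx)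
  have hpb1 : A * y - 1 < (p:ℝ) := Nat.sub_one_lt_floor _
  have hpb2 : (p:ℝ) ≤ A * y := Nat.floor_le (mul_nonneg hApos.le hy)
  have hqb : (q:ℝ) ≤ A * z := Nat.floor_le (mul_nonneg hApos.le hz)
  clear_value k p q
  set Sx := ∑ i ∈ Finset.range k, (l γ ω i : ℝ) with hSx
  set Sy := ∑ i ∈ Finset.range p, (l γ ω i : ℝ) with hSy
  set Sz := ∑ i ∈ Finset.range q, (l γ ω i : ℝ) with hSz
  have hIxy : (∑ i ∈ Finset.Ico k p, (l γ ω i : ℝ)) = Sy - Sx :=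
    Finset.sum_Ico_eq_sub _ hkp
  have hIyz : (∑ i ∈ Finset.Ico p q, (l γ ω i : ℝ)) = Sz - Sy :=
    Finset.sum_Ico_eq_sub _ hpq
  have hlow := antitone_sum_lower (hyoung γ ω) hkp
  have hupp := antitone_sum_upper (hyoung γ ω) hpq
  rw [hIxy] at hlow
  rw [hIyz] at hupp
  -- deterministic chain
  have hfpn : (0:ℝ) ≤ (l γ ω p : ℝ) := Nat.cast_nonneg _
  have hpkn : (0:ℝ) ≤ (p:ℝ) - k := sub_nonneg.2 (by exact_mod_cast hkp)
  have hqpn : (0:ℝ) ≤ (q:ℝ) - p := sub_nonneg.2 (by exact_mod_cast hpq)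
  have hdet : ((p:ℝ) - k) * (Sz - Sy) ≤ ((q:ℝ) - p) * (Sy - Sx) := by
    have ha1 := mul_le_mul_of_nonneg_left hupp hpkn
    have ha2 := mul_le_mul_of_nonneg_left hlow hqpn
    have heq : ((p:ℝ)-k)*(((q:ℝ)-p)*(l γ ω p : ℝ)) = ((q:ℝ)-p)*(((p:ℝ)-k)*(l γ ω p : ℝ)) := by
      ring
    linarith
  have hdetb : ((p:ℝ) - k) * (b γ * Sz - b γ * Sy) ≤
      ((q:ℝ) - p) * (b γ * Sy - b γ * Sx) := by
    have h := mul_le_mul_of_nonneg_left hdet hbp.le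
    calc ((p:ℝ)-k)*(b γ*Sz - b γ*Sy) = b γ * (((p:ℝ)-k)*(Sz-Sy)) := by ring
      _ ≤ b γ * (((q:ℝ)-p)*(Sy-Sx)) := h
      _ = ((q:ℝ)-p)*(b γ*Sy - b γ*Sx) := by ring
  have habs1 := abs_lt.1 hω1
  have habs2 := abs_lt.1 hω2
  have habs3 := abs_lt.1 hω3
  set C := G y - G x + 2*δ with hC
  set D := G z - G y - 2*δ with hD
  clear_value C D
  -- probabilistic bounds
  have hup : ((q:ℝ) - p) * (b γ * Sy - b γ * Sx) ≤ ((q:ℝ) - p) * C :=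
    mul_le_mul_of_nonneg_left (by rw [hC]; linarith [habs1.1, habs2.2]) hqpn
  have hdn : ((p:ℝ) - k) * D ≤ ((p:ℝ) - k) * (b γ * Sz - b γ * Sy) :=
    mul_le_mul_of_nonneg_left (by rw [hD]; linarith [habs2.2, habs3.1]) hpkn
  -- floor bounds
  have hCpos : 0 < C := by rw [hC]; linarith
  have hDpos : 0 < D := by rw [hD]; linarith
  have hqpA : (q:ℝ) - p ≤ A*(z-y) + 1 := by
    have e : A*(z-y) = A*z - A*y := by ring
    linarith
  have hpkA : A*(y-x) - 1 ≤ (p:ℝ) - k := by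
    have e : A*(y-x) = A*y - A*x := by ring
    linarith
  have hstep1 : ((q:ℝ) - p) * C ≤ (A*(z-y) + 1) * C :=
    mul_le_mul_of_nonneg_right hqpA hCpos.le
  have hstep2 : (A*(y-x) - 1) * D ≤ ((p:ℝ) - k) * D :=
    mul_le_mul_of_nonneg_right hpkA hDpos.le
  -- combined inequality
  have hkey : (A*(y-x) - 1) * D ≤ (A*(z-y) + 1) * C := by linarith
  -- contradiction
  have hB : 3*c/4 ≤ (y-x) * D - (z-y) * C := by
    rw [hC, hD]
    rw [le_div_iff₀ (by positivity : (0:ℝ) < 8*(z-x))] at hδ2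
    have e : (y-x)*(G z - G y - 2*δ) - (z-y)*(G y - G x + 2*δ) = c - 2*δ*(z-x) := by
      rw [hc]; ring
    linarith
  have hAn : 0 ≤ A := hApos.le
  have hcne : 3*c/4 ≠ 0 := by positivity
  clear_value c δ M A
  have e1 : A * (3*c/4) ≤ A * ((y-x) * D - (z-y) * C) := mul_le_mul_of_nonneg_left hB hAn
  have e2 : A * ((y-x) * D - (z-y) * C) ≤ C + D := by linarith [hkey]
  have hCD : C + D = G z - G x := by rw [hC, hD]; ring
  have hfin : A * (3*c/4) ≤ G z - G x := by linarith
  have hMM : M * (3*c/4) ≤ A * (3*c/4) :=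
    mul_le_mul_of_nonneg_right hAM (by positivity)
  have hMeq : M * (3*c/4) = G z - G x + 3*c/4 := by
    rw [hM, add_mul, one_mul, div_mul_cancel₀ _ hcne]
  linarith

set_option maxHeartbeats 1000000 in
private lemma deriv_lemma {α : Type*} [MeasurableSpace α] (μ : Measure α)
    [IsProbabilityMeasure μ] (l : ℝ → α → ℕ → ℕ)
    (hyoung : ∀ γ ω, Antitone (l γ ω))
    (a b : ℝ → ℝ) (hapos : ∀ γ, 0 < a γ) (hbpos : ∀ γ, 0 < b γ)
    (hatop : Tendsto a atTop atTop)
    (G : ℝ → ℝ)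
    (hconv : ∀ r ≥ (0 : ℝ), ∀ ε > (0 : ℝ),
      Tendsto (fun γ => μ {ω |
          ε ≤ |b γ * (∑ i ∈ Finset.range ⌊a γ * r⌋₊, (l γ ω i : ℝ)) - G r|})
        atTop (nhds 0))
    (hmono : MonotoneOn G (Set.Ici 0))
    {r : ℝ} (hr : 0 < r) {L : ℝ} (hL : HasDerivAt G L r) {ε : ℝ} (hε : 0 < ε) :
    Tendsto (fun γ => μ {ω |
        ε ≤ |a γ * b γ * (l γ ω ⌊a γ * r⌋₊ : ℝ) - L|}) atTop (nhds 0) := by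
  rw [hasDerivAt_iff_tendsto_slope] at hL
  have hball : ∀ᶠ y in nhdsWithin r {r}ᶜ, |slope G r y - L| < ε/8 := by
    have hmem : {v : ℝ | |v - L| < ε/8} ∈ nhds L := by
      have : Metric.ball L (ε/8) ∈ nhds L := Metric.ball_mem_nhds _ (by positivity)
      simpa [Metric.ball, Real.dist_eq] using this
    exact hL hmem
  rw [eventually_nhdsWithin_iff, Metric.eventually_nhds_iff] at hball
  obtain ⟨t, htpos, ht⟩ := hball
  set h := min (t/2) (r/2) with hhdef
  have hhpos : 0 < h := lt_min (by positivity) (by positivity)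
  have hhr : h < r := lt_of_le_of_lt (min_le_right _ _) (by linarith)
  have hht : h < t := lt_of_le_of_lt (min_le_left _ _) (by linarith)
  clear_value h
  have hs1 : |(G (r+h) - G r)/h - L| < ε/8 := by
    have hne : r + h ≠ r := by intro hcon; linarith [hhpos, congrArg (· - r) hcon]
    have hd : dist (r+h) r < t := by
      rw [Real.dist_eq, show r + h - r = h by ring, abs_of_pos hhpos]; exact hht
    have h2 := ht hd (by simpa using hne)
    rw [slope_def_field, show r + h - r = h by ring] at h2
    exact h2
  have hs2 : |(G r - G (r-h))/h - L| < ε/8 := by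
    have hne : r - h ≠ r := by
      intro hcon
      have := congrArg (fun v => r - v) hcon
      simp at this
      linarith
    have hd : dist (r-h) r < t := by
      rw [Real.dist_eq, show r - h - r = -h by ring, abs_neg, abs_of_pos hhpos]; exact hht
    have h2 := ht hd (by simpa using hne)
    rw [slope_def_field, show r - h - r = -h by ring, div_neg, ← neg_div, neg_sub] at h2
    exact h2
  -- slope bounds
  have hrh0 : (0:ℝ) ≤ r - h := by linarith
  have hmono1 : G (r-h) ≤ G r := hmono hrh0 hr.le (by linarith)
  have hmono2 : G r ≤ G (r+h) := hmono hr.le (by linarith : (0:ℝ) ≤ r + h) (by linarith)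
  have hu1 : G (r+h) - G r < (L + ε/8)*h := by
    have := (abs_lt.1 hs1).2
    have h2 : (G (r+h) - G r)/h < L + ε/8 := by linarith
    exact (div_lt_iff₀ hhpos).1 h2
  have hu2 : (L - ε/8)*h < G (r+h) - G r := by
    have := (abs_lt.1 hs1).1
    have h2 : L - ε/8 < (G (r+h) - G r)/h := by linarith
    exact (lt_div_iff₀ hhpos).1 h2
  have hv1 : G r - G (r-h) < (L + ε/8)*h := by
    have := (abs_lt.1 hs2).2
    have h2 : (G r - G (r-h))/h < L + ε/8 := by linarith
    exact (div_lt_iff₀ hhpos).1 h2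
  have hLlow : 0 < L + ε/8 := by
    have h0 : 0 < (L + ε/8)*h := lt_of_le_of_lt (by linarith : (0:ℝ) ≤ G (r+h) - G r) hu1
    rcases mul_pos_iff.1 h0 with ⟨h1, _⟩ | ⟨_, h2⟩
    · exact h1
    · linarith
  set δ := ε*h/16 with hδdef
  have hδpos : 0 < δ := by positivity
  have hB1 := hconv (r-h) hrh0 δ hδpos
  have hB2 := hconv r hr.le δ hδpos
  have hB3 := hconv (r+h) (by linarith) δ hδpos
  have hsum : Tendsto (fun γ =>
      μ {ω | δ ≤ |b γ * (∑ i ∈ Finset.range ⌊a γ * (r-h)⌋₊, (l γ ω i : ℝ)) - G (r-h)|} +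
      μ {ω | δ ≤ |b γ * (∑ i ∈ Finset.range ⌊a γ * r⌋₊, (l γ ω i : ℝ)) - G r|} +
      μ {ω | δ ≤ |b γ * (∑ i ∈ Finset.range ⌊a γ * (r+h)⌋₊, (l γ ω i : ℝ)) - G (r+h)|})
      atTop (nhds 0) := by
    simpa using (hB1.add hB2).add hB3
  have hEA : ∀ᶠ γ in atTop, (4*(L+ε/4)/(3*ε) + 1)/h ≤ a γ :=
    hatop.eventually_ge_atTop _
  have hEB : ∀ᶠ γ in atTop, ((4*(L-ε))/(3*ε))/h ≤ a γ :=
    hatop.eventually_ge_atTop _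
  have hEC : ∀ᶠ γ in atTop, 2/h ≤ a γ :=
    hatop.eventually_ge_atTop _
  apply tendsto_of_tendsto_of_tendsto_of_le_of_le' tendsto_const_nhds hsum
  · exact Eventually.of_forall fun γ => zero_le
  filter_upwards [hEA, hEB, hEC] with γ hA1 hA2 hA3
  refine le_trans (measure_mono ?_)
    (le_trans (measure_union_le _ _) (add_le_add (measure_union_le _ _) le_rfl))
  intro ω hω
  by_contra hno
  simp only [mem_union, mem_setOf_eq, not_or, not_le] at hno
  obtain ⟨⟨hg1, hg2⟩, hg3⟩ := hno
  simp only [mem_setOf_eq] at hω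
  set A := a γ with hAdef
  set bb := b γ with hbbdef
  have hApos : 0 < A := hapos γ
  have hbp : 0 < bb := hbpos γ
  set k := ⌊A * (r-h)⌋₊ with hkdef
  set m := ⌊A * r⌋₊ with hmdef
  set n := ⌊A * (r+h)⌋₊ with hndef
  have hkm : k ≤ m := Nat.floor_le_floor
    (mul_le_mul_of_nonneg_left (by linarith) hApos.le)
  have hmn : m ≤ n := Nat.floor_le_floor
    (mul_le_mul_of_nonneg_left (by linarith) hApos.le)
  have hkb : (k:ℝ) ≤ A * (r-h) := Nat.floor_le (by positivity)
  have hmb1 : A * r - 1 < (m:ℝ) := Nat.sub_one_lt_floor _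
  have hmb2 : (m:ℝ) ≤ A * r := Nat.floor_le (by positivity)
  have hnb1 : A * (r+h) - 1 < (n:ℝ) := Nat.sub_one_lt_floor _
  have hnb2 : (n:ℝ) ≤ A * (r+h) := Nat.floor_le (by positivity)
  set Sk := ∑ i ∈ Finset.range k, (l γ ω i : ℝ) with hSkdef
  set Sm := ∑ i ∈ Finset.range m, (l γ ω i : ℝ) with hSmdef
  set Sn := ∑ i ∈ Finset.range n, (l γ ω i : ℝ) with hSndef
  set T := (l γ ω m : ℝ) with hTdef
  have hTnn : 0 ≤ T := Nat.cast_nonneg _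
  have hIkm : (∑ i ∈ Finset.Ico k m, (l γ ω i : ℝ)) = Sm - Sk := Finset.sum_Ico_eq_sub _ hkm
  have hImn : (∑ i ∈ Finset.Ico m n, (l γ ω i : ℝ)) = Sn - Sm := Finset.sum_Ico_eq_sub _ hmn
  have hlow := antitone_sum_lower (hyoung γ ω) hkm
  have hupp := antitone_sum_upper (hyoung γ ω) hmn
  rw [hIkm] at hlow
  rw [hImn] at hupp
  -- multiply by bb
  have hlowb : ((m:ℝ) - k) * (bb * T) ≤ bb * Sm - bb * Sk := by
    have h2 := mul_le_mul_of_nonneg_left hlow hbp.le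
    calc ((m:ℝ) - k) * (bb * T) = bb * (((m:ℝ) - k) * T) := by ring
      _ ≤ bb * (Sm - Sk) := h2
      _ = bb * Sm - bb * Sk := by ring
  have huppb : bb * Sn - bb * Sm ≤ ((n:ℝ) - m) * (bb * T) := by
    have h2 := mul_le_mul_of_nonneg_left hupp hbp.le
    calc bb * Sn - bb * Sm = bb * (Sn - Sm) := by ring
      _ ≤ bb * (((n:ℝ) - m) * T) := h2
      _ = ((n:ℝ) - m) * (bb * T) := by ring
  have hga := abs_lt.1 hg1
  have hgb := abs_lt.1 hg2
  have hgc := abs_lt.1 hg3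
  clear_value k m n Sk Sm Sn T A bb
  -- conditions on A
  have hAh2 : 2 ≤ A * h := by
    rw [div_le_iff₀ hhpos] at hA3; linarith
  have hAhpos : 0 < A * h - 1 := by linarith
  have h3e : (0:ℝ) < 3*ε := by positivity
  have hcondA : L + ε/4 ≤ 3*ε/4 * (A*h - 1) := by
    rw [div_le_iff₀ hhpos] at hA1
    have h2 : 4*(L+ε/4)/(3*ε) ≤ A*h - 1 := by linarith
    rw [div_le_iff₀ h3e] at h2
    linarith
  have hcondB : 4*(L-ε) ≤ 3*ε*(A*h) := by
    rw [div_le_iff₀ hhpos] at hA2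
    have h2 : 4*(L-ε)/(3*ε) ≤ A*h := by linarith
    rw [div_le_iff₀ h3e] at h2
    linarith
  -- index gaps
  have hmk : A*h - 1 ≤ (m:ℝ) - k := by
    have e : A*(r-h) = A*r - A*h := by ring
    linarith
  have hnm : (n:ℝ) - m ≤ A*h + 1 := by
    have e : A*(r+h) = A*r + A*h := by ring
    linarith
  have hTb : 0 ≤ bb * T := by positivity
  -- upper bound : A * (bb*T) < L + ε
  have hup : A * (bb * T) < L + ε := by
    have s1 : (A*h - 1) * (bb*T) ≤ ((m:ℝ) - k) * (bb*T) :=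
      mul_le_mul_of_nonneg_right hmk hTb
    have s2 : bb * Sm - bb * Sk < G r - G (r-h) + 2*δ := by linarith [hga.1, hgb.2]
    have s3 : (A*h - 1) * (bb*T) < (L + ε/4)*h := by
      have e : (L + ε/8)*h + 2*δ = (L + ε/4)*h := by rw [hδdef]; ring
      linarith
    have s4 : (L + ε/4)*h ≤ (3*ε/4)*(A*h-1)*h := by
      have := mul_le_mul_of_nonneg_right hcondA hhpos.le
      linarith
    have s5 : bb*T < 3*ε/4*h := by
      have e : (3*ε/4)*(A*h-1)*h = (A*h-1)*((3*ε/4)*h) := by ring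
      have s6 : (A*h-1) * (bb*T) < (A*h-1)*((3*ε/4)*h) := by linarith
      exact lt_of_mul_lt_mul_left s6 hAhpos.le
    have s7 : (A * (bb*T)) * h < (L+ε)*h := by
      have e : (A * (bb*T)) * h = (A*h - 1) * (bb*T) + bb*T := by ring
      linarith
    exact lt_of_mul_lt_mul_right s7 hhpos.le
  -- lower bound : L - ε < A * (bb*T)
  have hdown : L - ε < A * (bb * T) := by
    by_cases hLe : L - ε < 0
    · have : 0 ≤ A * (bb*T) := mul_nonneg hApos.le hTb
      linarith
    push_neg at hLe
    have s1 : ((n:ℝ) - m) * (bb*T) ≤ (A*h + 1) * (bb*T) :=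
      mul_le_mul_of_nonneg_right hnm hTb
    have s2 : G (r+h) - G r - 2*δ < bb * Sn - bb * Sm := by linarith [hgb.2, hgc.1]
    have s3 : (L - ε/4)*h < (A*h+1) * (bb*T) := by
      have e : (L - ε/8)*h - 2*δ = (L - ε/4)*h := by rw [hδdef]; ring
      linarith
    have s4 : (L-ε)*(A*h+1) ≤ A*((L - ε/4)*h) := by linarith [hcondB]
    have s5 : A*((L - ε/4)*h) < A*((A*h+1)*(bb*T)) :=
      mul_lt_mul_of_pos_left s3 hApos
    have s6 : (L-ε)*(A*h+1) < (A*(bb*T))*(A*h+1) := by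
      have e : A*((A*h+1)*(bb*T)) = (A*(bb*T))*(A*h+1) := by ring
      linarith
    have hpos : (0:ℝ) < A*h+1 := by linarith
    exact lt_of_mul_lt_mul_right s6 hpos.le
  have heq : A * bb * T = A * (bb * T) := by ring
  rw [heq] at hω
  have : |A * (bb*T) - L| < ε := abs_lt.2 ⟨by linarith, by linarith⟩
  linarith [hω]

theorem stmt18 {α : Type*} [MeasurableSpace α] (μ : Measure α)
    [IsProbabilityMeasure μ] (l : ℝ → α → ℕ → ℕ)
    (hyoung : ∀ γ ω, Antitone (l γ ω))
    (a b : ℝ → ℝ) (hapos : ∀ γ, 0 < a γ) (hbpos : ∀ γ, 0 < b γ)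
    (hatop : Tendsto a atTop atTop)
    (G : ℝ → ℝ) (hGpos : ∀ r ≥ (0 : ℝ), 0 ≤ G r)
    (hconv : ∀ r ≥ (0 : ℝ), ∀ ε > (0 : ℝ),
      Tendsto (fun γ => μ {ω |
          ε ≤ |b γ * (∑ i ∈ Finset.range ⌊a γ * r⌋₊, (l γ ω i : ℝ)) - G r|})
        atTop (nhds 0)) :
    MonotoneOn G (Set.Ici 0) ∧ ConcaveOn ℝ (Set.Ici 0) G ∧
    ∀ r > (0 : ℝ), ∀ L : ℝ, HasDerivAt G L r → ∀ ε > (0 : ℝ),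
      Tendsto (fun γ => μ {ω |
          ε ≤ |a γ * b γ * (l γ ω ⌊a γ * r⌋₊ : ℝ) - L|})
        atTop (nhds 0) := by
  -- Monotonicity
  have hmono := mono_lemma μ l hyoung a b hapos hbpos hatop G hconv
  have hslope := slope_lemma μ l hyoung a b hapos hbpos hatop G hconv hmono
  have hconc : ConcaveOn ℝ (Set.Ici 0) G := by
    apply concaveOn_of_slope_anti_adjacent (convex_Ici 0)
    intro x y z hx hz hxy hyz
    rw [div_le_div_iff₀ (by linarith) (by linarith)]
    exact hslope x hx z hz y hxy hyz
  refine ⟨hmono, hconc, ?_⟩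
  intro r hr L hL ε hε
  exact deriv_lemma μ l hyoung a b hapos hbpos hatop G hconv hmono hr hL hε
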